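/- Let n ≥ 3, a > 0, and let α₁ ≥ α₂ be real numbers with α₂ ≥ (a − α₁ − α₂)/(n−2) and α₁ + α₂ ≤ a. If x ∈ ℝ^n has nonnegative components arranged in nonincreasing order, ∑_{i=1}^n x_i = a, x_1 ≥ α₁ and x_2 ≥ α₂, then the vector v = (α₁, α₂, (a−α₁−α₂)/(n−2), …, (a−α₁−α₂)/(n−2)) ∈ ℝ^n (with n−2 equal trailing components) is majorized by x. -/

import Mathlib

/-- `x` is majorized by `y`: all partial sums of `x` (components in nonincreasing order)
are at most the corresponding partial sums of `y`, with equal total sums. -/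
def IsMajorizedBy {n : ℕ} (x y : Fin n → ℝ) : Prop :=
  (∀ k : ℕ, k < n →
      ∑ i ∈ Finset.univ.filter (fun i : Fin n => (i : ℕ) < k), x i ≤
        ∑ i ∈ Finset.univ.filter (fun i : Fin n => (i : ℕ) < k), y i) ∧
    ∑ i, x i = ∑ i, y i

lemma filter_lt_sum {n : ℕ} (f : Fin n → ℝ) (k : ℕ) (hk : k ≤ n) :
    ∑ i ∈ Finset.univ.filter (fun i : Fin n => (i : ℕ) < k), f i
      = ∑ j ∈ Finset.range k, (if h : j < n then f ⟨j, h⟩ else 0) := by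
  rw [Finset.sum_filter]
  have h1 : ∀ i : Fin n, (if (i : ℕ) < k then f i else 0)
      = (fun j => if j < k then (if h : j < n then f ⟨j, h⟩ else 0) else 0) (i : ℕ) := by
    intro i; simp [i.isLt]
  rw [Finset.sum_congr rfl (fun i _ => h1 i),
    Fin.sum_univ_eq_sum_range (fun j => if j < k then (if h : j < n then f ⟨j, h⟩ else 0) else 0)]
  rw [← Finset.sum_subset (Finset.range_subset_range.mpr hk) (by intro j _ hj; simp at hj ⊢; omega)]
  exact Finset.sum_congr rfl (fun j hj => by simp at hj; simp [hj])

/-- For `n ≥ 3`, `a > 0`, `α₁ ≥ α₂ ≥ (a − α₁ − α₂)/(n−2)` and `α₁ + α₂ ≤ a`, the vector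
`(α₁, α₂, (a−α₁−α₂)/(n−2), …, (a−α₁−α₂)/(n−2))` is majorized by every nonnegative
nonincreasing `x ∈ ℝ^n` with `∑ x_i = a`, `x_1 ≥ α₁` and `x_2 ≥ α₂`. -/
theorem stmt_5 {n : ℕ} (hn : 3 ≤ n) (a : ℝ) (ha : 0 < a) (α₁ α₂ : ℝ)
    (h12 : α₂ ≤ α₁) (h2 : (a - α₁ - α₂) / (n - 2) ≤ α₂) (hsum12 : α₁ + α₂ ≤ a)
    (x : Fin n → ℝ) (hx : Antitone x) (hxpos : ∀ i, 0 ≤ x i)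
    (hsum : ∑ i, x i = a)
    (hx1 : α₁ ≤ x ⟨0, by omega⟩) (hx2 : α₂ ≤ x ⟨1, by omega⟩) :
    IsMajorizedBy
      (fun i : Fin n =>
        if (i : ℕ) = 0 then α₁ else if (i : ℕ) = 1 then α₂ else (a - α₁ - α₂) / (n - 2))
      x := by
  set c : ℝ := (a - α₁ - α₂) / (n - 2) with hc_def
  have hn2 : (2 : ℝ) < (n : ℝ) := by exact_mod_cast by omega
  have hc : c * ((n : ℝ) - 2) = a - α₁ - α₂ := div_mul_cancel₀ _ (by linarith)
  set v : Fin n → ℝ := fun i : Fin n =>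
      if (i : ℕ) = 0 then α₁ else if (i : ℕ) = 1 then α₂ else c with hv_def
  set X : ℕ → ℝ := fun j => if h : j < n then x ⟨j, h⟩ else 0 with hX_def
  set G : ℕ → ℝ := fun j => if h : j < n then v ⟨j, h⟩ else 0 with hG_def
  -- value of G
  have hGval : ∀ j, j < n → G j = if j = 0 then α₁ else if j = 1 then α₂ else c := by
    intro j hj; simp [hG_def, hv_def, hj]
  -- v partial sums
  have hvsum : ∀ k, 2 ≤ k → k ≤ n →
      ∑ j ∈ Finset.range k, G j = α₁ + α₂ + ((k : ℝ) - 2) * c := by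
    intro k h2k hkn
    have hsplit : ∑ j ∈ Finset.Ico 0 2, G j + ∑ j ∈ Finset.Ico 2 k, G j
        = ∑ j ∈ Finset.Ico 0 k, G j :=
      Finset.sum_Ico_consecutive _ (by omega) h2k
    have h02 : ∑ j ∈ Finset.Ico 0 2, G j = α₁ + α₂ := by
      rw [← Finset.range_eq_Ico]
      rw [Finset.sum_range_succ, Finset.sum_range_one, hGval 0 (by omega), hGval 1 (by omega)]
      norm_num
    have hmid : ∑ j ∈ Finset.Ico 2 k, G j = ((k : ℝ) - 2) * c := by
      have e : ∑ j ∈ Finset.Ico 2 k, G j = ∑ _j ∈ Finset.Ico 2 k, c :=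
        Finset.sum_congr rfl (fun j hj => by
          rw [Finset.mem_Ico] at hj
          have hj0 : ¬ (j = 0) := by omega
          have hj1 : ¬ (j = 1) := by omega
          rw [hGval j (by omega)]
          simp [hj0, hj1])
      rw [e, Finset.sum_const, Nat.card_Ico, nsmul_eq_mul]
      congr 1
      push_cast [h2k]
      ring
    rw [Finset.range_eq_Ico, ← hsplit, h02, hmid]
  -- total of x
  have hXtot : ∑ j ∈ Finset.range n, X j = a := by
    rw [← hsum, ← filter_lt_sum x n le_rfl]
    congr 1
    ext i
    simp [i.isLt]
  refine ⟨?_, ?_⟩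
  · intro k hk
    rw [filter_lt_sum _ k hk.le, filter_lt_sum x k hk.le]
    rcases Nat.lt_or_ge k 2 with hk2 | hk2
    · interval_cases k
      · simp
      · rw [Finset.sum_range_one, Finset.sum_range_one]
        have h0n : 0 < n := by omega
        simp only [hG_def, hX_def, dif_pos h0n]
        simpa [hv_def] using hx1
    · rw [hvsum k hk2 hk.le]
      have hkm : k - 1 < n := by omega
      by_cases hcase : c ≤ x ⟨k - 1, hkm⟩
      · -- each term from 2 to k-1 is ≥ c
        have h0 : α₁ ≤ X 0 := by simpa [hX_def, show 0 < n by omega] using hx1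
        have h1 : α₂ ≤ X 1 := by simpa [hX_def, show 1 < n by omega] using hx2
        have hsplit : ∑ j ∈ Finset.Ico 0 2, X j + ∑ j ∈ Finset.Ico 2 k, X j
            = ∑ j ∈ Finset.Ico 0 k, X j :=
          Finset.sum_Ico_consecutive _ (by omega) hk2
        have h02 : α₁ + α₂ ≤ ∑ j ∈ Finset.Ico 0 2, X j := by
          rw [← Finset.range_eq_Ico, Finset.sum_range_succ, Finset.sum_range_one]
          linarith
        have hmid : ((k : ℝ) - 2) * c ≤ ∑ j ∈ Finset.Ico 2 k, X j := by
          have := Finset.sum_le_sum (f := fun _ : ℕ => c) (g := X) (s := Finset.Ico 2 k)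
            (fun j hj => by
              rw [Finset.mem_Ico] at hj
              have hjn : j < n := by omega
              have hle : x ⟨j, hjn⟩ ≥ x ⟨k - 1, hkm⟩ := hx (by simp [Fin.mk_le_mk]; omega)
              simp only [hX_def, dif_pos hjn]
              linarith)
          calc ((k : ℝ) - 2) * c = (Finset.Ico 2 k).card • c := by
                rw [Nat.card_Ico, nsmul_eq_mul]; congr 1; push_cast [hk2]; ring
            _ ≤ _ := by rw [← Finset.sum_const]; exact this
        rw [Finset.range_eq_Ico, ← hsplit]
        linarith
      · push_neg at hcase
        -- tail bound
        have hsplit : ∑ j ∈ Finset.Ico 0 k, X j + ∑ j ∈ Finset.Ico k n, X j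
            = ∑ j ∈ Finset.Ico 0 n, X j :=
          Finset.sum_Ico_consecutive _ (by omega) hk.le
        have htail : ∑ j ∈ Finset.Ico k n, X j ≤ ((n : ℝ) - (k : ℝ)) * c := by
          have := Finset.sum_le_sum (f := X) (g := fun _ : ℕ => c) (s := Finset.Ico k n)
            (fun j hj => by
              rw [Finset.mem_Ico] at hj
              have hjn : j < n := hj.2
              have hle : x ⟨j, hjn⟩ ≤ x ⟨k - 1, hkm⟩ := hx (by simp [Fin.mk_le_mk]; omega)
              simp only [hX_def, dif_pos hjn]
              linarith)
          calc ∑ j ∈ Finset.Ico k n, X j ≤ (Finset.Ico k n).card • c := by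
                rw [← Finset.sum_const]; exact this
            _ = ((n : ℝ) - (k : ℝ)) * c := by
                rw [Nat.card_Ico, nsmul_eq_mul]; congr 1; push_cast [hk.le]; ring
        have hS : ∑ j ∈ Finset.Ico 0 n, X j = a := by
          rw [← Finset.range_eq_Ico]; exact hXtot
        rw [Finset.range_eq_Ico]
        nlinarith [hsplit, htail, hS, hc]
  · have : ∑ i, v i = ∑ j ∈ Finset.range n, G j := by
      rw [← filter_lt_sum v n le_rfl]
      congr 1
      ext i
      simp [i.isLt]
    rw [this, hvsum n (by omega) le_rfl, hsum]
    linarith
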